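/- Let (η₁^N)_{N≥1} and (η₂^N)_{N≥1} be independent sequences of random probability measures on measurable spaces (S₁,𝒮₁) and (S₂,𝒮₂) respectively, with deterministic probability-measure limits η₁, η₂, and suppose that for some p ≥ 1 there is a constant C with E[|η_k^N(φ) − η_k(φ)|^p]^{1/p} ≤ C‖φ‖/√N for all N > 0, all bounded measurable φ on S_k, and k = 1,2. Then there is a constant C' such that E[|(η₁^N × η₂^N)(φ) − (η₁ × η₂)(φ)|^p]^{1/p} ≤ C'‖φ‖/√N for all N > 0 and all bounded measurable φ on S₁ × S₂. -/

import Mathlib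

open MeasureTheory ProbabilityTheory

section aux

variable {α S : Type*} [MeasurableSpace α] [MeasurableSpace S]

/-- Measurability of a parametrized integral against a measurable family of sub-probability
measures, via the kernel machinery. -/
lemma meas_int_aux {m : α → Measure S} (hm : Measurable m) (hb : ∀ a, m a Set.univ ≤ 1)
    {f : α × S → ℝ} (hf : Measurable f) :
    Measurable fun a => ∫ x, f (a, x) ∂(m a) := by
  letI κ : Kernel α S := ⟨m, hm⟩
  haveI : IsFiniteKernel κ := ⟨⟨1, ENNReal.one_lt_top, hb⟩⟩
  exact (hf.stronglyMeasurable.integral_kernel_prod_right' (κ := κ)).measurable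

lemma integrable_bdd_aux {μ : Measure α} [IsFiniteMeasure μ] {f : α → ℝ}
    (hf : AEStronglyMeasurable f μ) {K : ℝ} (hK : ∀ a, |f a| ≤ K) : Integrable f μ :=
  Integrable.mono' (integrable_const K) hf (ae_of_all _ fun a => by
    simpa [Real.norm_eq_abs] using hK a)

lemma abs_integral_le_aux (μ : Measure S) [IsProbabilityMeasure μ] {f : S → ℝ} {M : ℝ}
    (hM : ∀ x, |f x| ≤ M) : |∫ x, f x ∂μ| ≤ M := by
  have := norm_integral_le_of_norm_le_const (μ := μ) (f := f) (C := M)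
    (ae_of_all _ fun x => by simpa [Real.norm_eq_abs] using hM x)
  simpa [Real.norm_eq_abs] using this

/-- Jensen's inequality for `t ↦ |t| ^ p`, `1 ≤ p`, on a probability space. -/
lemma jensen_abs_rpow_aux (μ : Measure S) [IsProbabilityMeasure μ] {p : ℝ} (hp : 1 ≤ p)
    {d : S → ℝ} (hd : Integrable d μ) (hdp : Integrable (fun x => |d x| ^ p) μ) :
    |∫ x, d x ∂μ| ^ p ≤ ∫ x, |d x| ^ p ∂μ := by
  have hp0 : (0:ℝ) ≤ p := le_trans zero_le_one hp
  have h1 : |∫ x, d x ∂μ| ≤ ∫ x, |d x| ∂μ := by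
    simpa [Real.norm_eq_abs] using norm_integral_le_integral_norm (μ := μ) d
  have h2 : (∫ x, |d x| ∂μ) ^ p ≤ ∫ x, |d x| ^ p ∂μ := by
    have := (convexOn_rpow hp).map_integral_le (μ := μ) (f := fun x => |d x|)
      ((Real.continuous_rpow_const hp0).continuousOn) isClosed_Ici
      (ae_of_all _ fun x => abs_nonneg (d x)) hd.abs (by exact hdp)
    exact this
  calc |∫ x, d x ∂μ| ^ p ≤ (∫ x, |d x| ∂μ) ^ p :=
        Real.rpow_le_rpow (abs_nonneg _) h1 hp0
    _ ≤ _ := h2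

lemma rpow_add_le_aux {p : ℝ} (hp : 1 ≤ p) (a b : ℝ) :
    |a + b| ^ p ≤ 2 ^ p * (|a| ^ p + |b| ^ p) := by
  have hp0 : (0:ℝ) ≤ p := le_trans zero_le_one hp
  have h1 : |a + b| ≤ 2 * max |a| |b| := by
    calc |a + b| ≤ |a| + |b| := abs_add_le a b
      _ ≤ max |a| |b| + max |a| |b| := add_le_add (le_max_left _ _) (le_max_right _ _)
      _ = 2 * max |a| |b| := by ring
  have h2 : |a + b| ^ p ≤ (2 * max |a| |b|) ^ p :=
    Real.rpow_le_rpow (abs_nonneg _) h1 hp0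
  have hm0 : (0:ℝ) ≤ max |a| |b| := le_trans (abs_nonneg a) (le_max_left _ _)
  have h3 : (2 * max |a| |b|) ^ p = 2 ^ p * (max |a| |b|) ^ p :=
    Real.mul_rpow (by norm_num) hm0
  have h4 : (max |a| |b|) ^ p ≤ |a| ^ p + |b| ^ p := by
    rcases max_cases |a| |b| with ⟨h, _⟩ | ⟨h, _⟩ <;> rw [h]
    · exact le_add_of_nonneg_right (Real.rpow_nonneg (abs_nonneg b) p)
    · exact le_add_of_nonneg_left (Real.rpow_nonneg (abs_nonneg a) p)
  calc |a + b| ^ p ≤ 2 ^ p * (max |a| |b|) ^ p := by rw [← h3]; exact h2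
    _ ≤ 2 ^ p * (|a| ^ p + |b| ^ p) := by
        have : (0:ℝ) ≤ 2 ^ p := Real.rpow_nonneg (by norm_num) p
        nlinarith [h4]

end aux

/-- Product step preserves `L^p` inequalities: if two independent sequences of random
probability measures `η₁^N, η₂^N` converge to `η₁, η₂` at rate `C‖φ‖/√N` in `L^p`, then so does
the product `η₁^N × η₂^N` to `η₁ × η₂` (with some constant `C'`). -/
theorem stmt3
    {Ω : Type*} [MeasurableSpace Ω] (P : Measure Ω) [IsProbabilityMeasure P]
    {S₁ S₂ : Type*} [MeasurableSpace S₁] [MeasurableSpace S₂]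
    (η₁ : ℕ → Ω → Measure S₁) (η₂ : ℕ → Ω → Measure S₂)
    (η₁lim : Measure S₁) (η₂lim : Measure S₂)
    [IsProbabilityMeasure η₁lim] [IsProbabilityMeasure η₂lim]
    (hprob₁ : ∀ N ω, IsProbabilityMeasure (η₁ N ω))
    (hprob₂ : ∀ N ω, IsProbabilityMeasure (η₂ N ω))
    (hmeas₁ : ∀ N, Measurable (η₁ N)) (hmeas₂ : ∀ N, Measurable (η₂ N))
    (hindep : IndepFun (fun ω (N : ℕ) => η₁ N ω) (fun ω (N : ℕ) => η₂ N ω) P)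
    (p C : ℝ) (hp : 1 ≤ p)
    (h₁ : ∀ N : ℕ, 0 < N → ∀ φ : S₁ → ℝ, Measurable φ → ∀ M : ℝ, (∀ x, |φ x| ≤ M) →
      (∫ ω, |(∫ x, φ x ∂(η₁ N ω)) - ∫ x, φ x ∂η₁lim| ^ p ∂P) ^ (1 / p)
        ≤ C * M / Real.sqrt N)
    (h₂ : ∀ N : ℕ, 0 < N → ∀ φ : S₂ → ℝ, Measurable φ → ∀ M : ℝ, (∀ x, |φ x| ≤ M) →
      (∫ ω, |(∫ x, φ x ∂(η₂ N ω)) - ∫ x, φ x ∂η₂lim| ^ p ∂P) ^ (1 / p)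
        ≤ C * M / Real.sqrt N) :
    ∃ C' : ℝ, ∀ N : ℕ, 0 < N → ∀ φ : S₁ × S₂ → ℝ, Measurable φ →
      ∀ M : ℝ, (∀ x, |φ x| ≤ M) →
      (∫ ω, |(∫ x, ∫ y, φ (x, y) ∂(η₂ N ω) ∂(η₁ N ω))
          - ∫ x, ∫ y, φ (x, y) ∂η₂lim ∂η₁lim| ^ p ∂P) ^ (1 / p)
        ≤ C' * M / Real.sqrt N := by
  classical
  have hp0 : (0:ℝ) ≤ p := le_trans zero_le_one hp
  have hpne : p ≠ 0 := by linarith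
  refine ⟨4 * C, ?_⟩
  intro N hN φ hφ M hM
  -- nonemptiness of the state spaces
  have hS₁ : Nonempty S₁ := by
    by_contra h
    have h0 : (Set.univ : Set S₁) = ∅ := Set.univ_eq_empty_iff.2 (not_nonempty_iff.mp h)
    have h1 : η₁lim Set.univ = 1 := measure_univ
    rw [h0, measure_empty] at h1
    exact one_ne_zero h1.symm
  have hS₂ : Nonempty S₂ := by
    by_contra h
    have h0 : (Set.univ : Set S₂) = ∅ := Set.univ_eq_empty_iff.2 (not_nonempty_iff.mp h)
    have h1 : η₂lim Set.univ = 1 := measure_univ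
    rw [h0, measure_empty] at h1
    exact one_ne_zero h1.symm
  obtain ⟨x₀⟩ := hS₁
  obtain ⟨y₀⟩ := hS₂
  have hM0 : 0 ≤ M := le_trans (abs_nonneg _) (hM (x₀, y₀))
  set K : ℝ := C * M / Real.sqrt N with hKdef
  have hφx : ∀ x : S₁, Measurable fun y => φ (x, y) := fun x =>
    hφ.comp measurable_prodMk_left
  have hK0 : 0 ≤ K := by
    refine le_trans ?_ (h₂ N hN (fun y => φ (x₀, y)) (hφx x₀) M (fun y => hM (x₀, y)))
    exact Real.rpow_nonneg
      (integral_nonneg fun ω => Real.rpow_nonneg (abs_nonneg _) p) _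
  -- the random measures at time N
  set X : Ω → Measure S₁ := η₁ N with hXdef
  set Y : Ω → Measure S₂ := η₂ N with hYdef
  have hX : Measurable X := hmeas₁ N
  have hY : Measurable Y := hmeas₂ N
  have hXY : IndepFun X Y P :=
    hindep.comp (measurable_pi_apply N) (measurable_pi_apply N)
  have hlaw : P.map (fun ω => (X ω, Y ω)) = (P.map X).prod (P.map Y) :=
    (indepFun_iff_map_prod_eq_prod_map_map hX.aemeasurable hY.aemeasurable).mp hXY
  -- truncations making all measures sub-probability
  set s : Measure S₁ → Measure S₁ := fun μ => if μ Set.univ = 1 then μ else 0 with hsdef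
  set t : Measure S₂ → Measure S₂ := fun ν => if ν Set.univ = 1 then ν else 0 with htdef
  have hset₁ : MeasurableSet {μ : Measure S₁ | μ Set.univ = 1} :=
    (Measure.measurable_coe MeasurableSet.univ) (measurableSet_singleton 1)
  have hset₂ : MeasurableSet {ν : Measure S₂ | ν Set.univ = 1} :=
    (Measure.measurable_coe MeasurableSet.univ) (measurableSet_singleton 1)
  have hs_meas : Measurable s := Measurable.ite hset₁ measurable_id measurable_const
  have ht_meas : Measurable t := Measurable.ite hset₂ measurable_id measurable_const
  have hs_le : ∀ μ, s μ Set.univ ≤ 1 := by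
    intro μ; by_cases h : μ Set.univ = 1 <;> simp [hsdef, h]
  have ht_le : ∀ ν, t ν Set.univ ≤ 1 := by
    intro ν; by_cases h : ν Set.univ = 1 <;> simp [htdef, h]
  have hs_eq : ∀ ω, s (X ω) = X ω := by
    intro ω
    haveI := hprob₁ N ω
    simp [hsdef, measure_univ, hXdef]
  have ht_eq : ∀ ω, t (Y ω) = Y ω := by
    intro ω
    haveI := hprob₂ N ω
    simp [htdef, measure_univ, hYdef]
  -- the limiting inner integral
  set g : S₁ → ℝ := fun x => ∫ y, φ (x, y) ∂η₂lim with hgdef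
  have hg_meas : Measurable g :=
    meas_int_aux (measurable_const : Measurable fun _ : S₁ => η₂lim)
      (fun _ => le_of_eq measure_univ) hφ
  have hg_bd : ∀ x, |g x| ≤ M := fun x => abs_integral_le_aux η₂lim fun y => hM (x, y)
  set c : ℝ := ∫ x, g x ∂η₁lim with hcdef
  -- bound on inner integrals against truncated measures
  have hJ_bd : ∀ (ν : Measure S₂) (x : S₁), |∫ y, φ (x, y) ∂(t ν)| ≤ M := by
    intro ν x
    by_cases h : ν Set.univ = 1
    · haveI : IsProbabilityMeasure ν := ⟨h⟩
      rw [show t ν = ν from if_pos h]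
      exact abs_integral_le_aux ν fun y => hM (x, y)
    · rw [show t ν = 0 from if_neg h]
      simpa using hM0
  -- jointly measurable inner integral
  have hJmeas : Measurable fun r : (Measure S₁ × Measure S₂) × S₁ =>
      ∫ y, φ (r.2, y) ∂(t r.1.2) :=
    meas_int_aux (m := fun r : (Measure S₁ × Measure S₂) × S₁ => t r.1.2)
      (f := fun z : ((Measure S₁ × Measure S₂) × S₁) × S₂ => φ (z.1.2, z.2))
      ((ht_meas.comp (measurable_snd.comp measurable_fst))) (fun r => ht_le _)
      (hφ.comp ((measurable_snd.comp measurable_fst).prodMk measurable_snd))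
  set F : (Measure S₁ × Measure S₂) × S₁ → ℝ :=
    fun r => |(∫ y, φ (r.2, y) ∂(t r.1.2)) - g r.2| ^ p with hFdef
  have hF_meas : Measurable F :=
    (Real.continuous_rpow_const hp0).measurable.comp
      ((hJmeas.sub (hg_meas.comp measurable_snd)).abs)
  have hF_nonneg : ∀ r, 0 ≤ F r := fun r => Real.rpow_nonneg (abs_nonneg _) _
  have hF_bd : ∀ r, |F r| ≤ (2 * M) ^ p := by
    intro r
    rw [abs_of_nonneg (hF_nonneg r)]
    refine Real.rpow_le_rpow (abs_nonneg _) ?_ hp0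
    calc |(∫ y, φ (r.2, y) ∂(t r.1.2)) - g r.2|
        ≤ |∫ y, φ (r.2, y) ∂(t r.1.2)| + |g r.2| := abs_sub (a := _) (b := _)
      _ ≤ M + M := add_le_add (hJ_bd _ _) (hg_bd _)
      _ = 2 * M := by ring
  set G : Measure S₁ × Measure S₂ → ℝ := fun q => ∫ x, F (q, x) ∂(s q.1) with hGdef
  have hG_meas : Measurable G :=
    meas_int_aux (hs_meas.comp measurable_fst) (fun q => hs_le _) hF_meas
  have hG_nonneg : ∀ q, 0 ≤ G q := fun q => integral_nonneg fun x => hF_nonneg _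
  have hG_bd : ∀ q, |G q| ≤ (2 * M) ^ p := by
    intro q
    by_cases h : q.1 Set.univ = 1
    · haveI : IsProbabilityMeasure q.1 := ⟨h⟩
      rw [hGdef]
      simp only
      rw [show s q.1 = q.1 from if_pos h]
      exact abs_integral_le_aux q.1 fun x => hF_bd (q, x)
    · rw [hGdef]
      simp only
      rw [show s q.1 = 0 from if_neg h]
      simpa using Real.rpow_nonneg (by linarith : (0:ℝ) ≤ 2 * M) p
  -- the random quantities
  set I : Ω → ℝ := fun ω => ∫ x, ∫ y, φ (x, y) ∂(Y ω) ∂(X ω) with hIdef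
  set m : Ω → ℝ := fun ω => ∫ x, g x ∂(X ω) with hmdef
  set A : Ω → ℝ := fun ω => I ω - m ω with hAdef
  set B : Ω → ℝ := fun ω => m ω - c with hBdef
  have hI_meas : Measurable I := by
    have h0 : Measurable fun q : Measure S₁ × Measure S₂ =>
        ∫ x, ∫ y, φ (x, y) ∂(t q.2) ∂(s q.1) :=
      meas_int_aux (hs_meas.comp measurable_fst) (fun q => hs_le _) hJmeas
    have := h0.comp (hX.prodMk hY)
    convert this using 1
    funext ω
    simp only [Function.comp_apply, hs_eq ω, ht_eq ω]
    rfl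
  have hm_meas : Measurable m := by
    refine meas_int_aux (m := X) hX (fun ω => ?_) (hg_meas.comp measurable_snd)
    haveI := hprob₁ N ω
    exact le_of_eq measure_univ
  have hA_meas : Measurable A := hI_meas.sub hm_meas
  have hB_meas : Measurable B := hm_meas.sub measurable_const
  have hI_bd : ∀ ω, |I ω| ≤ M := by
    intro ω
    haveI := hprob₁ N ω
    haveI := hprob₂ N ω
    exact abs_integral_le_aux (X ω) fun x => abs_integral_le_aux (Y ω) fun y => hM (x, y)
  have hm_bd : ∀ ω, |m ω| ≤ M := by
    intro ω
    haveI := hprob₁ N ω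
    exact abs_integral_le_aux (X ω) hg_bd
  have hc_bd : |c| ≤ M := abs_integral_le_aux η₁lim hg_bd
  have hA_bd : ∀ ω, |A ω| ≤ 2 * M := by
    intro ω
    calc |A ω| ≤ |I ω| + |m ω| := abs_sub _ _
      _ ≤ M + M := add_le_add (hI_bd ω) (hm_bd ω)
      _ = 2 * M := by ring
  have hB_bd : ∀ ω, |B ω| ≤ 2 * M := by
    intro ω
    calc |B ω| ≤ |m ω| + |c| := abs_sub _ _
      _ ≤ M + M := add_le_add (hm_bd ω) hc_bd
      _ = 2 * M := by ring
  set u : ℝ := ∫ ω, |A ω| ^ p ∂P with hudef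
  set v : ℝ := ∫ ω, |B ω| ^ p ∂P with hvdef
  have hu_nonneg : 0 ≤ u := integral_nonneg fun ω => Real.rpow_nonneg (abs_nonneg _) _
  have hv_nonneg : 0 ≤ v := integral_nonneg fun ω => Real.rpow_nonneg (abs_nonneg _) _
  -- step B : the easy term
  have hvK : v ^ (1 / p) ≤ K := h₁ N hN g hg_meas M hg_bd
  have hvKp : v ≤ K ^ p := by
    have h1 : (v ^ (1 / p)) ^ p ≤ K ^ p :=
      Real.rpow_le_rpow (Real.rpow_nonneg hv_nonneg _) hvK hp0
    rwa [one_div, Real.rpow_inv_rpow hv_nonneg hpne] at h1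
  -- step A : the independence term
  have huKp : u ≤ K ^ p := by
    -- pointwise Jensen
    have hpt : ∀ ω, |A ω| ^ p ≤ G (X ω, Y ω) := by
      intro ω
      haveI := hprob₁ N ω
      haveI := hprob₂ N ω
      have hGeq : G (X ω, Y ω) = ∫ x, |(∫ y, φ (x, y) ∂(Y ω)) - g x| ^ p ∂(X ω) := by
        rw [hGdef]
        simp only [hs_eq ω, ht_eq ω, hFdef]
      have hdmeas : Measurable fun x : S₁ => ∫ y, φ (x, y) ∂(Y ω) :=
        meas_int_aux (measurable_const : Measurable fun _ : S₁ => Y ω)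
          (fun _ => le_of_eq measure_univ) hφ
      have hd_bd : ∀ x, |(∫ y, φ (x, y) ∂(Y ω)) - g x| ≤ 2 * M := by
        intro x
        calc |(∫ y, φ (x, y) ∂(Y ω)) - g x|
            ≤ |∫ y, φ (x, y) ∂(Y ω)| + |g x| := abs_sub _ _
          _ ≤ M + M := add_le_add (abs_integral_le_aux (Y ω) fun y => hM (x, y)) (hg_bd x)
          _ = 2 * M := by ring
      have hAeq : A ω = ∫ x, ((∫ y, φ (x, y) ∂(Y ω)) - g x) ∂(X ω) := by
        rw [hAdef]
        simp only [hIdef, hmdef]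
        rw [integral_sub]
        · exact integrable_bdd_aux hdmeas.aestronglyMeasurable
            (fun x => abs_integral_le_aux (Y ω) fun y => hM (x, y))
        · exact integrable_bdd_aux hg_meas.aestronglyMeasurable hg_bd
      rw [hAeq, hGeq]
      refine jensen_abs_rpow_aux (X ω) hp ?_ ?_
      · exact integrable_bdd_aux ((hdmeas.sub hg_meas)).aestronglyMeasurable hd_bd
      · refine integrable_bdd_aux
          (((Real.continuous_rpow_const hp0).measurable.comp
            ((hdmeas.sub hg_meas)).abs)).aestronglyMeasurable (K := (2 * M) ^ p) ?_
        intro x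
        rw [abs_of_nonneg (Real.rpow_nonneg (abs_nonneg _) _)]
        exact Real.rpow_le_rpow (abs_nonneg _) (hd_bd x) hp0
    have hGcomp_meas : Measurable fun ω => G (X ω, Y ω) :=
      hG_meas.comp (hX.prodMk hY)
    have step1 : u ≤ ∫ ω, G (X ω, Y ω) ∂P := by
      refine integral_mono_of_nonneg
        (ae_of_all _ fun ω => Real.rpow_nonneg (abs_nonneg _) _)
        (integrable_bdd_aux hGcomp_meas.aestronglyMeasurable fun ω => hG_bd _)
        (ae_of_all _ hpt)
    have step2 : ∫ ω, G (X ω, Y ω) ∂P = ∫ q, G q ∂((P.map X).prod (P.map Y)) := by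
      rw [← hlaw, integral_map (hX.aemeasurable.prodMk hY.aemeasurable)
        hG_meas.aestronglyMeasurable]
    haveI hPX : IsProbabilityMeasure (P.map X) := Measure.isProbabilityMeasure_map hX.aemeasurable
    haveI hPY : IsProbabilityMeasure (P.map Y) := Measure.isProbabilityMeasure_map hY.aemeasurable
    have step3 : ∫ q, G q ∂((P.map X).prod (P.map Y)) ≤ K ^ p := by
      rw [integral_prod _ (integrable_bdd_aux hG_meas.aestronglyMeasurable hG_bd)]
      have hae : ∀ᵐ μ ∂(P.map X), μ Set.univ = 1 := by
        rw [ae_map_iff hX.aemeasurable hset₁]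
        refine ae_of_all _ fun ω => ?_
        haveI := hprob₁ N ω
        exact measure_univ
      have hinner : ∀ᵐ μ ∂(P.map X), (∫ ν, G (μ, ν) ∂(P.map Y)) ≤ K ^ p := by
        filter_upwards [hae] with μ hμ
        haveI : IsProbabilityMeasure μ := ⟨hμ⟩
        have hsμ : s μ = μ := if_pos hμ
        -- swap the two integrals
        have hFμ_meas : Measurable fun r : Measure S₂ × S₁ => F ((μ, r.1), r.2) :=
          hF_meas.comp ((measurable_const.prodMk measurable_fst).prodMk measurable_snd)
        have hswap : (∫ ν, G (μ, ν) ∂(P.map Y))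
            = ∫ x, ∫ ν, F ((μ, ν), x) ∂(P.map Y) ∂μ := by
          have h1 : (∫ ν, G (μ, ν) ∂(P.map Y))
              = ∫ ν, ∫ x, F ((μ, ν), x) ∂μ ∂(P.map Y) := by
            refine integral_congr_ae (ae_of_all _ fun ν => ?_)
            rw [hGdef]; simp only [hsμ]
          rw [h1]
          refine integral_integral_swap ?_
          exact integrable_bdd_aux (K := (2 * M) ^ p)
            (by exact hFμ_meas.aestronglyMeasurable) (fun r => hF_bd _)
        rw [hswap]
        have hx_bd : ∀ x : S₁, (∫ ν, F ((μ, ν), x) ∂(P.map Y)) ≤ K ^ p := by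
          intro x
          have hmeasν : Measurable fun ν : Measure S₂ => F ((μ, ν), x) :=
            hF_meas.comp ((measurable_const.prodMk measurable_id).prodMk measurable_const)
          have h1 : (∫ ν, F ((μ, ν), x) ∂(P.map Y)) = ∫ ω, F ((μ, Y ω), x) ∂P :=
            integral_map hY.aemeasurable hmeasν.aestronglyMeasurable
          have h2 : (∫ ω, F ((μ, Y ω), x) ∂P)
              = ∫ ω, |(∫ y, φ (x, y) ∂(η₂ N ω)) - ∫ y, φ (x, y) ∂η₂lim| ^ p ∂P := by
            refine integral_congr_ae (ae_of_all _ fun ω => ?_)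
            rw [hFdef]
            simp only [ht_eq ω, hgdef, hYdef]
            rw [show t (η₂ N ω) = η₂ N ω from ht_eq ω]
          have hh := h₂ N hN (fun y => φ (x, y)) (hφx x) M (fun y => hM (x, y))
          have hw0 : 0 ≤ ∫ ω, |(∫ y, φ (x, y) ∂(η₂ N ω)) - ∫ y, φ (x, y) ∂η₂lim| ^ p ∂P :=
            integral_nonneg fun ω => Real.rpow_nonneg (abs_nonneg _) _
          have h3 : (∫ ω, |(∫ y, φ (x, y) ∂(η₂ N ω)) - ∫ y, φ (x, y) ∂η₂lim| ^ p ∂P)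
              ≤ K ^ p := by
            have h4 := Real.rpow_le_rpow (Real.rpow_nonneg hw0 _) hh hp0
            rwa [one_div, Real.rpow_inv_rpow hw0 hpne] at h4
          rw [h1, h2]
          exact h3
        have hint : Integrable (fun x : S₁ => ∫ ν, F ((μ, ν), x) ∂(P.map Y)) μ := by
          refine integrable_bdd_aux (K := (2 * M) ^ p) ?_ ?_
          · exact (meas_int_aux (m := fun _ : S₁ => (P.map Y))
              (f := fun z : S₁ × Measure S₂ => F ((μ, z.2), z.1)) measurable_const
              (fun _ => le_of_eq measure_univ)
              (hF_meas.comp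
                ((measurable_const.prodMk measurable_snd).prodMk
                  measurable_fst))).aestronglyMeasurable
          · exact fun x => abs_integral_le_aux (P.map Y) fun ν => hF_bd _
        calc ∫ x, ∫ ν, F ((μ, ν), x) ∂(P.map Y) ∂μ ≤ ∫ _x, K ^ p ∂μ :=
              integral_mono hint (integrable_const _) hx_bd
          _ = K ^ p := by simp
      calc ∫ μ, ∫ ν, G (μ, ν) ∂(P.map Y) ∂(P.map X) ≤ ∫ _μ, K ^ p ∂(P.map X) := by
            refine integral_mono_of_nonneg
              (ae_of_all _ fun μ => integral_nonneg fun ν => hG_nonneg _)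
              (integrable_const _) hinner
        _ = K ^ p := by simp
    refine le_trans step1 ?_
    rw [step2]
    exact step3
  -- combine the two terms
  have hApmeas : Measurable fun ω => |A ω| ^ p :=
    (Real.continuous_rpow_const hp0).measurable.comp hA_meas.abs
  have hBpmeas : Measurable fun ω => |B ω| ^ p :=
    (Real.continuous_rpow_const hp0).measurable.comp hB_meas.abs
  have hApint : Integrable (fun ω => |A ω| ^ p) P := by
    refine integrable_bdd_aux (K := (2 * M) ^ p) hApmeas.aestronglyMeasurable fun ω => ?_
    rw [abs_of_nonneg (Real.rpow_nonneg (abs_nonneg _) _)]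
    exact Real.rpow_le_rpow (abs_nonneg _) (hA_bd ω) hp0
  have hBpint : Integrable (fun ω => |B ω| ^ p) P := by
    refine integrable_bdd_aux (K := (2 * M) ^ p) hBpmeas.aestronglyMeasurable fun ω => ?_
    rw [abs_of_nonneg (Real.rpow_nonneg (abs_nonneg _) _)]
    exact Real.rpow_le_rpow (abs_nonneg _) (hB_bd ω) hp0
  have hsum : (∫ ω, |A ω + B ω| ^ p ∂P) ≤ 2 ^ p * (u + v) := by
    have hRint : Integrable (fun ω => 2 ^ p * (|A ω| ^ p + |B ω| ^ p)) P :=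
      (hApint.add hBpint).const_mul _
    calc (∫ ω, |A ω + B ω| ^ p ∂P)
        ≤ ∫ ω, 2 ^ p * (|A ω| ^ p + |B ω| ^ p) ∂P :=
          integral_mono_of_nonneg
            (ae_of_all _ fun ω => Real.rpow_nonneg (abs_nonneg _) _) hRint
            (ae_of_all _ fun ω => rpow_add_le_aux hp (A ω) (B ω))
      _ = 2 ^ p * (u + v) := by
          rw [integral_const_mul, integral_add hApint hBpint]
  have hfinal1 : (∫ ω, |I ω - c| ^ p ∂P) ≤ 2 ^ (p + 1) * K ^ p := by
    have hIc : ∀ ω, I ω - c = A ω + B ω := fun ω => by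
      simp only [hAdef, hBdef]; ring
    calc (∫ ω, |I ω - c| ^ p ∂P) = ∫ ω, |A ω + B ω| ^ p ∂P := by
          refine integral_congr_ae (ae_of_all _ fun ω => ?_)
          show |I ω - c| ^ p = |A ω + B ω| ^ p
          rw [hIc ω]
      _ ≤ 2 ^ p * (u + v) := hsum
      _ ≤ 2 ^ p * (K ^ p + K ^ p) := by
          have h2p : (0:ℝ) ≤ 2 ^ p := Real.rpow_nonneg (by norm_num) _
          nlinarith [huKp, hvKp]
      _ = 2 ^ (p + 1) * K ^ p := by
          rw [Real.rpow_add (by norm_num : (0:ℝ) < 2), Real.rpow_one]; ring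
  have hLHS0 : 0 ≤ ∫ ω, |I ω - c| ^ p ∂P :=
    integral_nonneg fun ω => Real.rpow_nonneg (abs_nonneg _) _
  have h5 : (∫ ω, |I ω - c| ^ p ∂P) ^ (1 / p) ≤ (2 ^ (p + 1) * K ^ p) ^ (1 / p) :=
    Real.rpow_le_rpow hLHS0 hfinal1 (by positivity)
  have h6 : (2 ^ (p + 1) * K ^ p : ℝ) ^ (1 / p) = 2 ^ ((p + 1) * (1 / p)) * K := by
    rw [Real.mul_rpow (Real.rpow_nonneg (by norm_num) _) (Real.rpow_nonneg hK0 _),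
      ← Real.rpow_mul (by norm_num : (0:ℝ) ≤ 2)]
    congr 1
    rw [one_div, Real.rpow_rpow_inv hK0 hpne]
  have h7 : (2:ℝ) ^ ((p + 1) * (1 / p)) * K ≤ 4 * K := by
    refine mul_le_mul_of_nonneg_right ?_ hK0
    have hppos : (0:ℝ) < p := lt_of_lt_of_le one_pos hp
    have hexp : (p + 1) * (1 / p) ≤ 2 := by
      rw [mul_one_div, div_le_iff₀ hppos]
      linarith
    calc (2:ℝ) ^ ((p + 1) * (1 / p)) ≤ 2 ^ (2:ℝ) :=
          Real.rpow_le_rpow_of_exponent_le (by norm_num) hexp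
      _ = 4 := by
          rw [show (2:ℝ) = ((2:ℕ):ℝ) by norm_num, Real.rpow_natCast]
          norm_num
  have hmain : (∫ ω, |I ω - c| ^ p ∂P) ^ (1 / p) ≤ 4 * K :=
    le_trans h5 (le_trans (le_of_eq h6) h7)
  refine le_trans (le_of_eq ?_) (le_trans hmain (le_of_eq ?_))
  · rfl
  · rw [hKdef]; ring
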